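/- Let w : ℝ → ℝ be four times continuously differentiable, let x₀ ∈ ℝ and Δx > 0, and for k ∈ {−1, 0, 1} let w̄_k = (1/Δx)·∫_{x₀+(k−1/2)Δx}^{x₀+(k+1/2)Δx} w(x)dx denote the cell averages of w over the three consecutive cells of size Δx centered at x₀ − Δx, x₀, x₀ + Δx. Then |w(x₀) − (w̄₀ − (1/24)·(w̄₁ − 2·w̄₀ + w̄₋₁))| ≤ (Δx⁴/100)·sup_{x ∈ [x₀−3Δx/2, x₀+3Δx/2]} |w⁗(x)|. That is, the correction of the cell average by one twenty-fourth of its discrete second difference recovers the pointwise value with fourth-order accuracy. -/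

import Mathlib

open intervalIntegral MeasureTheory

lemma hasDerivAt_pow_shift (x0 t : ℝ) (n : ℕ) :
    HasDerivAt (fun s => (s - x0) ^ (n+1) / (n+1)) ((t - x0) ^ n) t := by
  have h := (((hasDerivAt_id t).sub_const x0).pow (n+1)).div_const ((n:ℝ)+1)
  have hn : ((n:ℝ)+1) ≠ 0 := by positivity
  refine h.congr_deriv ?_
  simp only [id, Nat.add_sub_cancel, mul_one]
  push_cast
  field_simp

lemma hasDerivAt_pow_shift' (x0 t : ℝ) (n : ℕ) :
    HasDerivAt (fun s => -((x0 - s) ^ (n+1) / (n+1))) ((x0 - t) ^ n) t := by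
  have h := ((((hasDerivAt_id t).neg.add_const x0).pow (n+1)).div_const ((n:ℝ)+1)).neg
  have hn : ((n:ℝ)+1) ≠ 0 := by positivity
  have e : (fun s : ℝ => -((x0 - s) ^ (n+1) / (n+1)))
      = (-fun x => ((fun x => (-id) x + x0) ^ (n + 1)) x / ((n:ℝ) + 1)) := by
    funext s; norm_num [sub_eq_neg_add, add_comm]
  rw [e]
  refine h.congr_deriv ?_
  simp only [Pi.neg_apply, id, Nat.add_sub_cancel]
  push_cast
  field_simp
  ring_nf

lemma integral_pow_shift (x0 a b : ℝ) (n : ℕ) :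
    ∫ t in a..b, (t - x0) ^ n = (b - x0) ^ (n+1) / (n+1) - (a - x0) ^ (n+1) / (n+1) :=
  integral_eq_sub_of_hasDerivAt (fun t _ => hasDerivAt_pow_shift x0 t n)
    (((continuous_id.sub continuous_const).pow n).intervalIntegrable _ _ :
      IntervalIntegrable (fun t => (t - x0) ^ n) volume a b)

lemma abs_integral_abs_pow (x0 x : ℝ) (m : ℕ) :
    |∫ t in x0..x, |t - x0| ^ m| = |x - x0| ^ (m+1) / (m+1) := by
  rcases le_total x0 x with h | h
  · have hc : ∫ t in x0..x, |t - x0| ^ m = ∫ t in x0..x, (t - x0) ^ m := by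
      apply integral_congr
      intro t ht
      rw [Set.uIcc_of_le h] at ht
      simp only
      rw [abs_of_nonneg (by linarith [ht.1] : (0:ℝ) ≤ t - x0)]
    have hxx : (0:ℝ) ≤ x - x0 := by linarith
    rw [hc, integral_pow_shift, abs_of_nonneg hxx]
    simp only [sub_self, zero_pow (Nat.succ_ne_zero m), zero_div, sub_zero]
    rw [abs_of_nonneg (by positivity)]
  · have hc : ∫ t in x0..x, |t - x0| ^ m = ∫ t in x0..x, (x0 - t) ^ m := by
      apply integral_congr
      intro t ht
      rw [Set.uIcc_of_ge h] at ht
      simp only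
      rw [abs_of_nonpos (by linarith [ht.2] : t - x0 ≤ 0), neg_sub]
    have hi : ∫ t in x0..x, (x0 - t) ^ m
        = -((x0 - x) ^ (m+1) / (m+1)) - -((x0 - x0) ^ (m+1) / (m+1)) :=
      integral_eq_sub_of_hasDerivAt (fun t _ => hasDerivAt_pow_shift' x0 t m)
        (((continuous_const.sub continuous_id).pow m).intervalIntegrable _ _ :
          IntervalIntegrable (fun t => (x0 - t) ^ m) volume x0 x)
    rw [hc, hi, abs_of_nonpos (by linarith : x - x0 ≤ 0)]
    simp only [sub_self, zero_pow (Nat.succ_ne_zero m), zero_div, neg_zero, sub_neg_eq_add,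
      add_zero, neg_sub]
    have h1 : (0:ℝ) ≤ (x0 - x) ^ (m+1) := pow_nonneg (by linarith) _
    have h2 : (0:ℝ) < (m:ℝ)+1 := by positivity
    have h3 := div_nonneg h1 h2.le
    rw [abs_of_nonpos (by linarith)]
    ring
lemma step_bound (f : ℝ → ℝ) (hf : Differentiable ℝ f) (hc : Continuous (deriv f))
    (x0 x M : ℝ) (hM : 0 ≤ M) (m : ℕ) (h0 : f x0 = 0)
    (hb : ∀ t ∈ Set.uIcc x0 x, |deriv f t| ≤ M * |t - x0| ^ m / m.factorial) :
    |f x| ≤ M * |x - x0| ^ (m+1) / (m+1).factorial := by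
  have hFTC : ∫ t in x0..x, deriv f t = f x - f x0 :=
    integral_deriv_eq_sub (fun t _ => hf t) (hc.intervalIntegrable _ _)
  have hgi : IntervalIntegrable (fun t => M * |t - x0| ^ m / m.factorial) volume x0 x := by
    apply Continuous.intervalIntegrable
    continuity
  have hae : ∀ᵐ t ∂(volume.restrict (Set.uIoc x0 x)),
      ‖deriv f t‖ ≤ M * |t - x0| ^ m / m.factorial := by
    refine (ae_restrict_iff' measurableSet_uIoc).2 (Filter.Eventually.of_forall fun t ht => ?_)
    exact hb t (Set.uIoc_subset_uIcc ht)
  have hkey := norm_integral_le_abs_of_norm_le hae hgi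
  rw [hFTC, h0, sub_zero] at hkey
  calc |f x| ≤ |∫ t in x0..x, M * |t - x0| ^ m / m.factorial| := hkey
    _ = (M / m.factorial) * |∫ t in x0..x, |t - x0| ^ m| := by
        have : ∀ t : ℝ, M * |t - x0| ^ m / m.factorial
            = (M / m.factorial) * |t - x0| ^ m := fun t => by ring
        simp_rw [this, intervalIntegral.integral_const_mul, abs_mul,
          abs_of_nonneg (div_nonneg hM (Nat.cast_nonneg _))]
    _ = M * |x - x0| ^ (m+1) / (m+1).factorial := by
        rw [abs_integral_abs_pow]
        rw [Nat.factorial_succ]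
        have h1 : (m.factorial : ℝ) ≠ 0 := Nat.cast_ne_zero.2 m.factorial_ne_zero
        have h2 : ((m:ℝ)+1) ≠ 0 := by positivity
        push_cast
        field_simp
lemma taylor4_bound (w : ℝ → ℝ) (hw : ContDiff ℝ 4 w) (x0 M x : ℝ) (hM : 0 ≤ M)
    (hMb : ∀ t ∈ Set.uIcc x0 x, |iteratedDeriv 4 w t| ≤ M) :
    |w x - (w x0 + deriv w x0 * (x - x0) + iteratedDeriv 2 w x0 / 2 * (x - x0)^2
        + iteratedDeriv 3 w x0 / 6 * (x - x0)^3)| ≤ M * |x - x0|^4 / 24 := by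
  set d1 := deriv w x0 with hd1
  set i2 := iteratedDeriv 2 w x0 with hi2
  set i3 := iteratedDeriv 3 w x0 with hi3
  have hD0 : Differentiable ℝ w := hw.differentiable (by norm_num)
  have hD1 : Differentiable ℝ (deriv w) := by
    have := hw.differentiable_iteratedDeriv 1 (by norm_num)
    rwa [iteratedDeriv_one] at this
  have hD2 : Differentiable ℝ (iteratedDeriv 2 w) :=
    hw.differentiable_iteratedDeriv 2 (by norm_num)
  have hD3 : Differentiable ℝ (iteratedDeriv 3 w) :=
    hw.differentiable_iteratedDeriv 3 (by norm_num)
  have hC4 : Continuous (iteratedDeriv 4 w) := hw.continuous_iteratedDeriv 4 (by norm_num)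
  have hC3 : Continuous (iteratedDeriv 3 w) := hw.continuous_iteratedDeriv 3 (by norm_num)
  have hC2 : Continuous (iteratedDeriv 2 w) := hw.continuous_iteratedDeriv 2 (by norm_num)
  have hC1 : Continuous (deriv w) := by
    have := hw.continuous_iteratedDeriv 1 (by norm_num)
    rwa [iteratedDeriv_one] at this
  set R3 : ℝ → ℝ := fun t => iteratedDeriv 3 w t - i3 with hR3
  set R2 : ℝ → ℝ := fun t => iteratedDeriv 2 w t - i2 - i3 * (t - x0) with hR2
  set R1 : ℝ → ℝ := fun t => deriv w t - d1 - i2 * (t - x0) - i3/2 * (t - x0)^2 with hR1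
  set R0 : ℝ → ℝ := fun t => w t - w x0 - d1 * (t - x0) - i2/2 * (t - x0)^2
    - i3/6 * (t - x0)^3 with hR0
  -- HasDerivAt facts
  have h3 : ∀ t, HasDerivAt (iteratedDeriv 3 w) (iteratedDeriv 4 w t) t := by
    intro t
    have := (hD3 t).hasDerivAt
    rwa [show deriv (iteratedDeriv 3 w) t = iteratedDeriv 4 w t by
      rw [← iteratedDeriv_succ]] at this
  have h2 : ∀ t, HasDerivAt (iteratedDeriv 2 w) (iteratedDeriv 3 w t) t := by
    intro t
    have := (hD2 t).hasDerivAt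
    rwa [show deriv (iteratedDeriv 2 w) t = iteratedDeriv 3 w t by
      rw [← iteratedDeriv_succ]] at this
  have h1 : ∀ t, HasDerivAt (deriv w) (iteratedDeriv 2 w t) t := by
    intro t
    have := (hD1 t).hasDerivAt
    rwa [show deriv (deriv w) t = iteratedDeriv 2 w t by
      rw [show deriv w = iteratedDeriv 1 w from iteratedDeriv_one.symm, ← iteratedDeriv_succ]] at this
  have h0 : ∀ t, HasDerivAt w (deriv w t) t := fun t => (hD0 t).hasDerivAt
  have hlin : ∀ t : ℝ, HasDerivAt (fun s => s - x0) 1 t :=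
    fun t => (hasDerivAt_id t).sub_const x0
  -- derivatives of the R's
  have hdR3 : deriv R3 = iteratedDeriv 4 w := by
    funext t; exact (((h3 t).sub_const i3)).deriv
  have hdR2 : deriv R2 = R3 := by
    funext t
    have : HasDerivAt R2 (R3 t) t := by
      have := ((h2 t).sub_const i2).sub (((hlin t)).const_mul i3)
      refine this.congr_deriv ?_; simp [hR3]; try ring
    exact this.deriv
  have hdR1 : deriv R1 = R2 := by
    funext t
    have : HasDerivAt R1 (R2 t) t := by
      have := (((h1 t).sub_const d1).sub ((hlin t).const_mul i2)).sub
        ((((hlin t).pow 2)).const_mul (i3/2))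
      refine this.congr_deriv ?_; simp [hR2]; try ring
    exact this.deriv
  have hdR0 : deriv R0 = R1 := by
    funext t
    have : HasDerivAt R0 (R1 t) t := by
      have := ((((h0 t).sub_const (w x0)).sub ((hlin t).const_mul d1)).sub
        (((hlin t).pow 2).const_mul (i2/2))).sub (((hlin t).pow 3).const_mul (i3/6))
      refine this.congr_deriv ?_; simp [hR1]; try ring
    exact this.deriv
  -- differentiability of the R's
  have hfR3 : Differentiable ℝ R3 := hD3.sub_const _
  have hfR2 : Differentiable ℝ R2 := by
    exact (hD2.sub_const _).sub ((differentiable_id.sub_const _).const_mul _)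
  have hfR1 : Differentiable ℝ R1 := by
    exact ((hD1.sub_const _).sub ((differentiable_id.sub_const _).const_mul _)).sub
      (((differentiable_id.sub_const _).pow 2).const_mul _)
  have hfR0 : Differentiable ℝ R0 := by
    exact (((hD0.sub_const _).sub ((differentiable_id.sub_const _).const_mul _)).sub
      (((differentiable_id.sub_const _).pow 2).const_mul _)).sub
      (((differentiable_id.sub_const _).pow 3).const_mul _)
  -- continuity of derivs
  have hcR3 : Continuous (deriv R3) := by rw [hdR3]; exact hC4
  have hcR2 : Continuous (deriv R2) := by
    rw [hdR2, hR3]; exact hC3.sub continuous_const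
  have hcR1 : Continuous (deriv R1) := by
    rw [hdR1, hR2]; fun_prop
  have hcR0 : Continuous (deriv R0) := by
    rw [hdR0, hR1]; fun_prop
  -- step bounds
  have hsub : ∀ t ∈ Set.uIcc x0 x, Set.uIcc x0 t ⊆ Set.uIcc x0 x :=
    fun t ht => Set.uIcc_subset_uIcc Set.left_mem_uIcc ht
  have hB3 : ∀ t ∈ Set.uIcc x0 x, |R3 t| ≤ M * |t - x0| ^ 1 / (Nat.factorial 1) := by
    intro t ht
    exact step_bound R3 hfR3 hcR3 x0 t M hM 0 (by simp [hR3, hi3])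
      (fun s hs => by rw [hdR3]; simpa using hMb s (hsub t ht hs))
  have hB2 : ∀ t ∈ Set.uIcc x0 x, |R2 t| ≤ M * |t - x0| ^ 2 / (Nat.factorial 2) := by
    intro t ht
    exact step_bound R2 hfR2 hcR2 x0 t M hM 1 (by simp [hR2, hi2])
      (fun s hs => by rw [hdR2]; exact hB3 s (hsub t ht hs))
  have hB1 : ∀ t ∈ Set.uIcc x0 x, |R1 t| ≤ M * |t - x0| ^ 3 / (Nat.factorial 3) := by
    intro t ht
    exact step_bound R1 hfR1 hcR1 x0 t M hM 2 (by simp [hR1, hd1])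
      (fun s hs => by rw [hdR1]; exact hB2 s (hsub t ht hs))
  have hB0 : |R0 x| ≤ M * |x - x0| ^ 4 / (Nat.factorial 4) :=
    step_bound R0 hfR0 hcR0 x0 x M hM 3 (by simp [hR0])
      (fun s hs => by rw [hdR0]; exact hB1 s hs)
  have : Nat.factorial 4 = 24 := by norm_num [Nat.factorial]
  rw [this] at hB0
  calc |w x - (w x0 + d1 * (x - x0) + i2 / 2 * (x - x0)^2 + i3 / 6 * (x - x0)^3)|
      = |R0 x| := by rw [hR0]; ring_nf
    _ ≤ M * |x - x0|^4 / 24 := by exact_mod_cast hB0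

lemma cell_bound (w P : ℝ → ℝ) (hwc : Continuous w) (hPc : Continuous P)
    (x0 M lo hi a b : ℝ) (hab : a ≤ b) (haK : Set.Icc a b ⊆ Set.Icc lo hi)
    (hRb : ∀ t ∈ Set.Icc lo hi, |w t - P t| ≤ M * (t - x0)^4 / 24) :
    |(∫ t in a..b, w t) - ∫ t in a..b, P t|
      ≤ |M/24 * ((b - x0)^5/5 - (a - x0)^5/5)| := by
  have hsub : (∫ t in a..b, w t) - ∫ t in a..b, P t = ∫ t in a..b, (w t - P t) :=
    (integral_sub (hwc.intervalIntegrable _ _) (hPc.intervalIntegrable _ _)).symm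
  rw [hsub]
  have hgi : IntervalIntegrable (fun t => M * (t - x0)^4 / 24) volume a b := by
    apply Continuous.intervalIntegrable; fun_prop
  have hae : ∀ᵐ t ∂(volume.restrict (Set.uIoc a b)),
      ‖w t - P t‖ ≤ M * (t - x0)^4 / 24 := by
    refine (ae_restrict_iff' measurableSet_uIoc).2 (Filter.Eventually.of_forall fun t ht => ?_)
    have htK : t ∈ Set.Icc lo hi := by
      apply haK
      have := Set.uIoc_subset_uIcc ht
      rwa [Set.uIcc_of_le hab] at this
    exact hRb t htK
  have hkey := norm_integral_le_abs_of_norm_le hae hgi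
  refine hkey.trans (le_of_eq ?_)
  congr 1
  have e : ∀ t : ℝ, M * (t - x0)^4 / 24 = (M/24) * (t - x0)^4 := fun t => by ring
  simp_rw [e, intervalIntegral.integral_const_mul, integral_pow_shift]
  norm_num

set_option maxHeartbeats 1000000 in
/-- Fourth-order pointwise recovery from cell averages: for a `C⁴` function
`w`, correcting the central cell average by one twenty-fourth of its discrete
second difference recovers `w(x₀)` with an error bounded by
`(Δx⁴/100) · sup |w⁗|` over the three cells. -/
theorem pointwise_value_from_cell_averages_fourth_order
    (w : ℝ → ℝ) (hw : ContDiff ℝ 4 w) (x0 Δx : ℝ) (hΔx : 0 < Δx)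
    (wm1 w0 wp1 : ℝ)
    (hwm1 : wm1 = (1/Δx) * ∫ x in (x0 + (-1 - 1/2)*Δx)..(x0 + (-1 + 1/2)*Δx), w x)
    (hw0 : w0 = (1/Δx) * ∫ x in (x0 + (0 - 1/2)*Δx)..(x0 + (0 + 1/2)*Δx), w x)
    (hwp1 : wp1 = (1/Δx) * ∫ x in (x0 + (1 - 1/2)*Δx)..(x0 + (1 + 1/2)*Δx), w x) :
    |w x0 - (w0 - (1/24) * (wp1 - 2*w0 + wm1))|
      ≤ (Δx^4/100) *
        ⨆ x ∈ Set.Icc (x0 - 3*Δx/2) (x0 + 3*Δx/2), |iteratedDeriv 4 w x| := by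
  subst hwm1 hw0 hwp1
  set K := Set.Icc (x0 - 3*Δx/2) (x0 + 3*Δx/2) with hKdef
  set M := ⨆ x ∈ K, |iteratedDeriv 4 w x| with hMdef
  have hx0K : x0 ∈ K := by
    rw [hKdef]; constructor <;> nlinarith
  have hC4 : Continuous (iteratedDeriv 4 w) := hw.continuous_iteratedDeriv 4 (by norm_num)
  obtain ⟨z, hzK, hz⟩ := isCompact_Icc.exists_isMaxOn (Set.nonempty_of_mem hx0K)
    (hC4.abs.continuousOn (s := K))
  have hbdd : BddAbove (Set.range fun t => ⨆ _ : t ∈ K, |iteratedDeriv 4 w t|) := by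
    refine ⟨|iteratedDeriv 4 w z|, fun y hy => ?_⟩
    obtain ⟨t, rfl⟩ := hy
    simp only
    by_cases ht : t ∈ K
    · rw [ciSup_pos (f := fun _ : t ∈ K => |iteratedDeriv 4 w t|) ht]; exact hz ht
    · haveI : IsEmpty (t ∈ K) := ⟨ht⟩
      rw [Real.iSup_of_isEmpty]
      positivity
  have hMub : ∀ t ∈ K, |iteratedDeriv 4 w t| ≤ M := by
    intro t ht
    calc |iteratedDeriv 4 w t| = ⨆ _ : t ∈ K, |iteratedDeriv 4 w t| :=
        (ciSup_pos (f := fun _ : t ∈ K => |iteratedDeriv 4 w t|) ht).symm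
      _ ≤ M := le_ciSup hbdd t
  have hM0 : 0 ≤ M := (abs_nonneg _).trans (hMub x0 hx0K)
  -- Taylor polynomial and antiderivative
  set d1 := deriv w x0 with hd1
  set i2 := iteratedDeriv 2 w x0 with hi2
  set i3 := iteratedDeriv 3 w x0 with hi3
  set P : ℝ → ℝ := fun t => w x0 + d1*(t-x0) + i2/2*(t-x0)^2 + i3/6*(t-x0)^3 with hPdef
  have hPc : Continuous P := by rw [hPdef]; fun_prop
  have hwc : Continuous w := hw.continuous
  set F : ℝ → ℝ := fun t => w x0 * (t-x0) + d1/2*(t-x0)^2 + i2/6*(t-x0)^3 + i3/24*(t-x0)^4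
    with hFdef
  have hF : ∀ t, HasDerivAt F (P t) t := by
    intro t
    have hl : HasDerivAt (fun s : ℝ => s - x0) 1 t := (hasDerivAt_id t).sub_const x0
    have h := (((hl.const_mul (w x0)).add ((hl.pow 2).const_mul (d1/2))).add
      ((hl.pow 3).const_mul (i2/6))).add ((hl.pow 4).const_mul (i3/24))
    rw [hFdef, hPdef]
    refine h.congr_deriv ?_
    push_cast
    ring
  have hIP : ∀ a b : ℝ, ∫ t in a..b, P t = F b - F a := fun a b =>
    integral_eq_sub_of_hasDerivAt (fun t _ => hF t) (hPc.intervalIntegrable _ _)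
  have hFval : ∀ c : ℝ, F (x0 + c*Δx)
      = w x0 * (c*Δx) + d1/2*(c*Δx)^2 + i2/6*(c*Δx)^3 + i3/24*(c*Δx)^4 := by
    intro c; rw [hFdef]; ring_nf
  -- remainder bound on K
  have hRb : ∀ t ∈ K, |w t - P t| ≤ M * (t - x0)^4 / 24 := by
    intro t ht
    have hsub : Set.uIcc x0 t ⊆ K := by rw [hKdef]; exact Set.uIcc_subset_Icc hx0K ht
    have h := taylor4_bound w hw x0 M t hM0 (fun s hs => hMub s (hsub hs))
    have habs : |t - x0|^4 = (t - x0)^4 := by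
      rw [← abs_pow, abs_of_nonneg (by positivity)]
    rw [habs] at h
    calc |w t - P t|
        = |w t - (w x0 + d1 * (t - x0) + i2 / 2 * (t - x0)^2 + i3 / 6 * (t - x0)^3)| := by
          rw [hPdef]
      _ ≤ M * (t - x0)^4 / 24 := h
  -- the three cells
  set am1 := x0 + (-1 - 1/2)*Δx with ham1
  set bm1 := x0 + (-1 + 1/2)*Δx with hbm1
  set a0 := x0 + (0 - 1/2)*Δx with ha0
  set b0 := x0 + (0 + 1/2)*Δx with hb0
  set a1 := x0 + (1 - 1/2)*Δx with ha1
  set b1 := x0 + (1 + 1/2)*Δx with hb1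
  set IRm1 := (∫ t in am1..bm1, w t) - ∫ t in am1..bm1, P t with hIRm1
  set IR0 := (∫ t in a0..b0, w t) - ∫ t in a0..b0, P t with hIR0
  set IR1 := (∫ t in a1..b1, w t) - ∫ t in a1..b1, P t with hIR1
  clear_value IRm1 IR0 IR1
  -- bounds on the remainder integrals
  have hbm1' : |IRm1| ≤ 121 * M * Δx^5 / 1920 := by
    rw [hIRm1]
    refine (cell_bound w P hwc hPc x0 M (x0 - 3*Δx/2) (x0 + 3*Δx/2) am1 bm1
      (by rw [ham1, hbm1]; linarith) (by rw [ham1, hbm1]; apply Set.Icc_subset_Icc <;> linarith)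
      hRb).trans (le_of_eq ?_)
    rw [ham1, hbm1, show M/24 * (((x0 + (-1 + 1/2)*Δx) - x0)^5/5 - ((x0 + (-1 - 1/2)*Δx) - x0)^5/5)
      = 121 * M * Δx^5 / 1920 by ring]
    exact abs_of_nonneg (by positivity)
  have hb0' : |IR0| ≤ M * Δx^5 / 1920 := by
    rw [hIR0]
    refine (cell_bound w P hwc hPc x0 M (x0 - 3*Δx/2) (x0 + 3*Δx/2) a0 b0
      (by rw [ha0, hb0]; linarith) (by rw [ha0, hb0]; apply Set.Icc_subset_Icc <;> linarith)
      hRb).trans (le_of_eq ?_)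
    rw [ha0, hb0, show M/24 * (((x0 + (0 + 1/2)*Δx) - x0)^5/5 - ((x0 + (0 - 1/2)*Δx) - x0)^5/5)
      = M * Δx^5 / 1920 by ring]
    exact abs_of_nonneg (by positivity)
  have hb1' : |IR1| ≤ 121 * M * Δx^5 / 1920 := by
    rw [hIR1]
    refine (cell_bound w P hwc hPc x0 M (x0 - 3*Δx/2) (x0 + 3*Δx/2) a1 b1
      (by rw [ha1, hb1]; linarith) (by rw [ha1, hb1]; apply Set.Icc_subset_Icc <;> linarith)
      hRb).trans (le_of_eq ?_)
    rw [ha1, hb1, show M/24 * (((x0 + (1 + 1/2)*Δx) - x0)^5/5 - ((x0 + (1 - 1/2)*Δx) - x0)^5/5)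
      = 121 * M * Δx^5 / 1920 by ring]
    exact abs_of_nonneg (by positivity)
  -- algebraic identity: the scheme is exact on the cubic part
  have hΔne : Δx ≠ 0 := ne_of_gt hΔx
  have hkey : w x0 - (((1/Δx) * ∫ t in a0..b0, w t)
        - (1/24) * (((1/Δx) * ∫ t in a1..b1, w t)
          - 2*((1/Δx) * ∫ t in a0..b0, w t) + ((1/Δx) * ∫ t in am1..bm1, w t)))
      = -(1/Δx) * ((13/12)*IR0 - (1/24)*(IR1 + IRm1)) := by
    have e0 : (∫ t in a0..b0, w t) = (F b0 - F a0) + IR0 := by rw [hIR0, hIP]; ring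
    have e1 : (∫ t in a1..b1, w t) = (F b1 - F a1) + IR1 := by rw [hIR1, hIP]; ring
    have em1 : (∫ t in am1..bm1, w t) = (F bm1 - F am1) + IRm1 := by rw [hIRm1, hIP]; ring
    rw [e0, e1, em1, ham1, hbm1, ha0, hb0, ha1, hb1, hFval, hFval, hFval, hFval, hFval, hFval]
    field_simp
    ring
  rw [hkey, abs_mul, abs_neg, abs_of_pos (by positivity : (0:ℝ) < 1/Δx)]
  have hX : |(13/12)*IR0 - (1/24)*(IR1 + IRm1)| ≤ 268/46080 * (M * Δx^5) := by
    have u0 := abs_le.1 hb0'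
    have u1 := abs_le.1 hb1'
    have um1 := abs_le.1 hbm1'
    rw [abs_le]
    constructor <;> [nlinarith [u0.1, u0.2, u1.1, u1.2, um1.1, um1.2];
      nlinarith [u0.1, u0.2, u1.1, u1.2, um1.1, um1.2]]
  calc (1/Δx) * |(13/12)*IR0 - (1/24)*(IR1 + IRm1)|
      ≤ (1/Δx) * (268/46080 * (M * Δx^5)) :=
        mul_le_mul_of_nonneg_left hX (by positivity)
    _ = 268/46080 * M * Δx^4 := by field_simp
    _ ≤ Δx^4/100 * M := by nlinarith [mul_nonneg hM0 (pow_nonneg hΔx.le 4)]
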